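/- Let T : H₁ → H₂ be a bounded Fredholm operator between Hilbert spaces. If S is another bounded operator sufficiently close to T in operator norm, then S is Fredholm with the same index as T. -/

import Mathlib

open Module

/-- A bounded operator is Fredholm if its kernel is finite-dimensional,
its range is closed, and its cokernel is finite-dimensional. -/
def IsFredholm {E F : Type*} [NormedAddCommGroup E] [NormedSpace ℝ E]
    [NormedAddCommGroup F] [NormedSpace ℝ F] (T : E →L[ℝ] F) : Prop :=
  FiniteDimensional ℝ (LinearMap.ker (T : E →ₗ[ℝ] F)) ∧ IsClosed (LinearMap.range (T : E →ₗ[ℝ] F) : Set F) ∧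
    FiniteDimensional ℝ (F ⧸ LinearMap.range (T : E →ₗ[ℝ] F))

/-- The Fredholm index: `dim ker − dim coker`. -/
noncomputable def fredholmIndex {E F : Type*} [NormedAddCommGroup E] [NormedSpace ℝ E]
    [NormedAddCommGroup F] [NormedSpace ℝ F] (T : E →L[ℝ] F) : ℤ :=
  (finrank ℝ (LinearMap.ker (T : E →ₗ[ℝ] F)) : ℤ) - (finrank ℝ (F ⧸ LinearMap.range (T : E →ₗ[ℝ] F)) : ℤ)

/-- Key auxiliary lemma: if the "doubled" operator `(x, v) ↦ (S x + v, P x)` is a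
continuous linear equivalence `H₁ × V ≃ H₂ × K` with `K`, `V` finite-dimensional,
then `S` is Fredholm with index `dim K - dim V`. -/
theorem aux_fredholm {H₁ H₂ : Type*} [NormedAddCommGroup H₁] [NormedSpace ℝ H₁]
    [NormedAddCommGroup H₂] [NormedSpace ℝ H₂]
    (S : H₁ →L[ℝ] H₂) (K : Submodule ℝ H₁) (V : Submodule ℝ H₂)
    [FiniteDimensional ℝ K] [FiniteDimensional ℝ V]
    (P : H₁ →L[ℝ] K) (e : (H₁ × V) ≃L[ℝ] (H₂ × K))
    (he : ∀ (x : H₁) (v : V), e (x, v) = (S x + v, P x)) :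
    FiniteDimensional ℝ (LinearMap.ker (S : H₁ →ₗ[ℝ] H₂)) ∧ IsClosed (LinearMap.range (S : H₁ →ₗ[ℝ] H₂) : Set H₂) ∧
    FiniteDimensional ℝ (H₂ ⧸ LinearMap.range (S : H₁ →ₗ[ℝ] H₂)) ∧
    fredholmIndex S = (finrank ℝ K : ℤ) - finrank ℝ V := by
  classical
  -- the submodule of `V` consisting of vectors lying in the range of `S`
  set U : Submodule ℝ V := (LinearMap.range (S : H₁ →ₗ[ℝ] H₂)).comap V.subtype with hU
  -- maps obtained from `e.symm`
  set ψ : K →ₗ[ℝ] H₁ × V :=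
    (e.symm.toLinearEquiv.toLinearMap).comp (LinearMap.inr ℝ H₂ K) with hψdef
  set ξ : K →ₗ[ℝ] H₁ := (LinearMap.fst ℝ H₁ V).comp ψ with hξdef
  set μ : K →ₗ[ℝ] V := (LinearMap.snd ℝ H₁ V).comp ψ with hμdef
  have hψe : ∀ w : K, e (ξ w, μ w) = (0, w) := by
    intro w
    have h : (ξ w, μ w) = e.symm (0, w) := rfl
    rw [h, e.apply_symm_apply]
  have hψ : ∀ w : K, S (ξ w) + ↑(μ w) = 0 ∧ P (ξ w) = w := by
    intro w
    have h := (he (ξ w) (μ w)).symm.trans (hψe w)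
    exact ⟨congrArg Prod.fst h, congrArg Prod.snd h⟩
  set f : H₂ →L[ℝ] H₁ := (ContinuousLinearMap.fst ℝ H₁ V).comp
    ((e.symm : (H₂ × K) →L[ℝ] (H₁ × V)).comp (ContinuousLinearMap.inl ℝ H₂ K)) with hfdef
  set g : H₂ →L[ℝ] V := (ContinuousLinearMap.snd ℝ H₁ V).comp
    ((e.symm : (H₂ × K) →L[ℝ] (H₁ × V)).comp (ContinuousLinearMap.inl ℝ H₂ K)) with hgdef
  have hfg : ∀ y : H₂, S (f y) + ↑(g y) = y := by
    intro y
    have h1 : e (f y, g y) = (y, 0) := by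
      have h : (f y, g y) = e.symm (y, 0) := rfl
      rw [h, e.apply_symm_apply]
    exact congrArg Prod.fst ((he (f y) (g y)).symm.trans h1)
  -- range of S is a preimage of U
  have hrange : (LinearMap.range (S : H₁ →ₗ[ℝ] H₂) : Set H₂) = g ⁻¹' (U : Set V) := by
    ext y
    simp only [Set.mem_preimage, SetLike.mem_coe, hU, Submodule.mem_comap,
      Submodule.coe_subtype]
    constructor
    · intro hy
      have h : (↑(g y) : H₂) = y - S (f y) := eq_sub_of_add_eq' (hfg y)
      rw [h]
      exact Submodule.sub_mem _ hy (LinearMap.mem_range.mpr ⟨f y, rfl⟩)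
    · intro hy
      have h : y = S (f y) + ↑(g y) := (hfg y).symm
      rw [h]
      exact Submodule.add_mem _ (LinearMap.mem_range.mpr ⟨f y, rfl⟩) hy
  have hclosed : IsClosed (LinearMap.range (S : H₁ →ₗ[ℝ] H₂) : Set H₂) := by
    rw [hrange]
    exact (Submodule.closed_of_finiteDimensional U).preimage g.continuous
  -- range of μ is U
  have hμU : LinearMap.range μ = U := by
    ext v
    constructor
    · rintro ⟨w, rfl⟩
      show (↑(μ w) : H₂) ∈ LinearMap.range (S : H₁ →ₗ[ℝ] H₂)
      refine ⟨-(ξ w), ?_⟩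
      rw [map_neg]
      exact neg_eq_of_add_eq_zero_right (hψ w).1
    · intro hv
      obtain ⟨x, hx⟩ : ∃ x, S x = (v : H₂) := hv
      have h1 : e (-x, v) = (0, -(P x)) := by
        rw [he]
        refine Prod.ext ?_ (map_neg P x)
        show S (-x) + ↑v = 0
        rw [map_neg, hx]; exact neg_add_cancel _
      have h2 : ψ (-(P x)) = (-x, v) := by
        have h : ψ (-(P x)) = e.symm (0, -(P x)) := rfl
        rw [h, ← h1, e.symm_apply_apply]
      exact ⟨-(P x), congrArg Prod.snd h2⟩
  -- kernel of S is equivalent to kernel of μ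
  have hξker : ∀ w : K, w ∈ LinearMap.ker μ → ξ w ∈ LinearMap.ker (S : H₁ →ₗ[ℝ] H₂) := by
    intro w hw
    rw [LinearMap.mem_ker] at hw ⊢
    have h := (hψ w).1
    rw [hw] at h
    simpa using h
  let κ : LinearMap.ker μ →ₗ[ℝ] LinearMap.ker (S : H₁ →ₗ[ℝ] H₂) :=
    LinearMap.codRestrict (LinearMap.ker (S : H₁ →ₗ[ℝ] H₂)) (ξ.comp (LinearMap.ker μ).subtype)
      fun w => hξker w w.2
  have hκbij : Function.Bijective κ := by
    constructor
    · intro w w' hww'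
      have hxi : ξ ↑w = ξ ↑w' := congrArg Subtype.val hww'
      have hmu : μ ↑w = μ ↑w' := by rw [w.2, w'.2]
      have h : e (ξ ↑w, μ ↑w) = e (ξ ↑w', μ ↑w') := by rw [hxi, hmu]
      rw [hψe, hψe] at h
      exact Subtype.ext (congrArg Prod.snd h)
    · rintro ⟨x, hx⟩
      have hx0 : S x = 0 := LinearMap.mem_ker.mp hx
      have h1 : e (x, 0) = (0, P x) := by
        rw [he]
        refine Prod.ext ?_ rfl
        show S x + ((0 : V) : H₂) = 0
        rw [hx0]; simp
      have h2 : ψ (P x) = (x, 0) := by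
        have h : ψ (P x) = e.symm (0, P x) := rfl
        rw [h, ← h1, e.symm_apply_apply]
      have hmem : P x ∈ LinearMap.ker μ := by
        rw [LinearMap.mem_ker]
        exact congrArg Prod.snd h2
      exact ⟨⟨P x, hmem⟩, Subtype.ext (congrArg Prod.fst h2)⟩
  let κe : LinearMap.ker μ ≃ₗ[ℝ] LinearMap.ker (S : H₁ →ₗ[ℝ] H₂) := LinearEquiv.ofBijective κ hκbij
  haveI hfinker : FiniteDimensional ℝ (LinearMap.ker (S : H₁ →ₗ[ℝ] H₂)) := κe.finiteDimensional
  have hkrank : finrank ℝ (LinearMap.ker (S : H₁ →ₗ[ℝ] H₂)) = finrank ℝ (LinearMap.ker μ) :=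
    κe.symm.finrank_eq
  -- cokernel
  set β : V →ₗ[ℝ] H₂ ⧸ LinearMap.range (S : H₁ →ₗ[ℝ] H₂) :=
    (LinearMap.range (S : H₁ →ₗ[ℝ] H₂)).mkQ.comp V.subtype with hβdef
  have hβsurj : Function.Surjective β := by
    intro z
    obtain ⟨y, rfl⟩ := Submodule.Quotient.mk_surjective _ z
    refine ⟨g y, ?_⟩
    show Submodule.Quotient.mk (↑(g y) : H₂) = Submodule.Quotient.mk y
    rw [Submodule.Quotient.eq]
    have h : (↑(g y) : H₂) - y = -(S (f y)) := by
      have := hfg y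
      abel_nf
      rw [eq_sub_of_add_eq' this]
      abel
    rw [h]
    exact Submodule.neg_mem _ (LinearMap.mem_range.mpr ⟨f y, rfl⟩)
  have hβker : LinearMap.ker β = U := by
    ext v
    rw [LinearMap.mem_ker]
    show Submodule.Quotient.mk (↑v : H₂) = 0 ↔ _
    rw [Submodule.Quotient.mk_eq_zero]
    exact Iff.rfl
  haveI hfincoker : FiniteDimensional ℝ (H₂ ⧸ LinearMap.range (S : H₁ →ₗ[ℝ] H₂)) :=
    FiniteDimensional.of_surjective β hβsurj
  -- rank-nullity computations
  have h1 : finrank ℝ U + finrank ℝ (LinearMap.ker μ) = finrank ℝ K := by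
    rw [← hμU]; exact LinearMap.finrank_range_add_finrank_ker μ
  have h2 : finrank ℝ (H₂ ⧸ LinearMap.range (S : H₁ →ₗ[ℝ] H₂)) + finrank ℝ U = finrank ℝ V := by
    rw [← hβker]
    have hr : LinearMap.range β = ⊤ := LinearMap.range_eq_top.mpr hβsurj
    have := LinearMap.finrank_range_add_finrank_ker β
    rw [hr, finrank_top] at this
    exact this
  refine ⟨hfinker, hclosed, hfincoker, ?_⟩
  unfold fredholmIndex
  rw [hkrank]
  omega

/-- Fredholm operators between Hilbert spaces are stable under small perturbations
in operator norm, and the index is locally constant. -/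
theorem stmt4 {H₁ H₂ : Type*} [NormedAddCommGroup H₁] [InnerProductSpace ℝ H₁]
    [CompleteSpace H₁] [NormedAddCommGroup H₂] [InnerProductSpace ℝ H₂] [CompleteSpace H₂]
    (T : H₁ →L[ℝ] H₂) (hT : IsFredholm T) :
    ∃ ε > 0, ∀ S : H₁ →L[ℝ] H₂, ‖S - T‖ < ε →
      IsFredholm S ∧ fredholmIndex S = fredholmIndex T := by
  classical
  obtain ⟨hker, hclosed, hcoker⟩ := hT
  haveI : FiniteDimensional ℝ (LinearMap.ker (T : H₁ →ₗ[ℝ] H₂)) := hker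
  haveI : FiniteDimensional ℝ (H₂ ⧸ LinearMap.range (T : H₁ →ₗ[ℝ] H₂)) := hcoker
  set R : Submodule ℝ H₂ := LinearMap.range (T : H₁ →ₗ[ℝ] H₂) with hR
  haveI : CompleteSpace R := hclosed.completeSpace_coe
  have hcompl : IsCompl R Rᗮ := Submodule.isCompl_orthogonal_of_hasOrthogonalProjection
  haveI : FiniteDimensional ℝ ↥Rᗮ :=
    (Submodule.quotientEquivOfIsCompl R Rᗮ hcompl).finiteDimensional
  haveI : CompleteSpace (LinearMap.ker (T : H₁ →ₗ[ℝ] H₂)) := FiniteDimensional.complete ℝ _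
  set P : H₁ →L[ℝ] (LinearMap.ker (T : H₁ →ₗ[ℝ] H₂)) := Submodule.orthogonalProjectionOnto (LinearMap.ker (T : H₁ →ₗ[ℝ] H₂)) with hP
  set Φ : (H₁ →L[ℝ] H₂) → ((H₁ × ↥Rᗮ) →L[ℝ] (H₂ × ↥(LinearMap.ker (T : H₁ →ₗ[ℝ] H₂)))) := fun S =>
    ((S.comp (ContinuousLinearMap.fst ℝ H₁ ↥Rᗮ)) +
      (Rᗮ.subtypeL.comp (ContinuousLinearMap.snd ℝ H₁ ↥Rᗮ))).prod
      (P.comp (ContinuousLinearMap.fst ℝ H₁ ↥Rᗮ)) with hΦdef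
  have hΦ : ∀ (S : H₁ →L[ℝ] H₂) (x : H₁) (v : ↥Rᗮ), Φ S (x, v) = (S x + ↑v, P x) :=
    fun _ _ _ => rfl
  -- Φ T is bijective
  have hTinj : LinearMap.ker (Φ T : (H₁ × ↥Rᗮ) →ₗ[ℝ] (H₂ × ↥(LinearMap.ker (T : H₁ →ₗ[ℝ] H₂)))) = ⊥ := by
    rw [eq_bot_iff]
    rintro ⟨x, v⟩ hp
    have h : Φ T (x, v) = 0 := hp
    rw [hΦ] at h
    have h1 : T x + ↑v = 0 := congrArg Prod.fst h
    have h2 : P x = 0 := congrArg Prod.snd h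
    have hTx : T x ∈ Rᗮ := by
      have : T x = -(↑v : H₂) := eq_neg_of_add_eq_zero_left h1
      rw [this]
      exact Submodule.neg_mem _ v.2
    have hTx0 : T x = 0 := by
      have := hcompl.disjoint
      exact (Submodule.disjoint_def.mp this) (T x) (LinearMap.mem_range.mpr ⟨x, rfl⟩) hTx
    have hv0 : (↑v : H₂) = 0 := by rw [hTx0] at h1; simpa using h1
    have hxK : x ∈ LinearMap.ker (T : H₁ →ₗ[ℝ] H₂) := LinearMap.mem_ker.mpr hTx0
    have hx0 : x = 0 := by
      have h3 : ((Submodule.orthogonalProjectionOnto (LinearMap.ker (T : H₁ →ₗ[ℝ] H₂)) x : H₁)) = x :=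
        Submodule.starProjection_eq_self_iff.mpr hxK
      rw [hP] at h2
      rw [h2] at h3
      simpa using h3.symm
    refine Submodule.mem_bot ℝ |>.mpr ?_
    exact Prod.ext hx0 (Subtype.ext hv0)
  have hTsurj : LinearMap.range (Φ T : (H₁ × ↥Rᗮ) →ₗ[ℝ] (H₂ × ↥(LinearMap.ker (T : H₁ →ₗ[ℝ] H₂)))) = ⊤ := by
    rw [LinearMap.range_eq_top]
    rintro ⟨y, w⟩
    have hy : y ∈ R ⊔ Rᗮ := by rw [hcompl.sup_eq_top]; trivial
    obtain ⟨r, hr, v, hv, hyrv⟩ := Submodule.mem_sup.mp hy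
    obtain ⟨z, hz⟩ := LinearMap.mem_range.mp hr
    refine ⟨(z - ↑(P z) + ↑w, ⟨v, hv⟩), ?_⟩
    show Φ T (z - ↑(P z) + ↑w, ⟨v, hv⟩) = (y, w)
    rw [hΦ]
    refine Prod.ext ?_ ?_
    · show T (z - ↑(P z) + ↑w) + v = y
      have hPz : T ↑(P z) = 0 := LinearMap.mem_ker.mp (P z).2
      have hw : T ↑w = 0 := LinearMap.mem_ker.mp w.2
      rw [map_add, map_sub, hPz, hw, sub_zero, add_zero, show T z = r from hz, hyrv]
    · show P (z - ↑(P z) + ↑w) = w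
      rw [map_add, map_sub]
      simp [hP, Submodule.orthogonalProjectionOnto_mem_subspace_eq_self, - Submodule.coe_orthogonalProjectionOnto_apply]
  let eT : (H₁ × ↥Rᗮ) ≃L[ℝ] (H₂ × ↥(LinearMap.ker (T : H₁ →ₗ[ℝ] H₂))) :=
    ContinuousLinearEquiv.ofBijective (Φ T) hTinj hTsurj
  have heT : (eT : (H₁ × ↥Rᗮ) →L[ℝ] (H₂ × ↥(LinearMap.ker (T : H₁ →ₗ[ℝ] H₂)))) = Φ T := rfl
  obtain ⟨ε, hε, hball⟩ := Metric.isOpen_iff.mp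
    (ContinuousLinearEquiv.isOpen (𝕜 := ℝ) (E := H₁ × ↥Rᗮ)
      (F := H₂ × ↥(LinearMap.ker (T : H₁ →ₗ[ℝ] H₂)))) (Φ T) ⟨eT, heT⟩
  refine ⟨ε, hε, fun S hS => ?_⟩
  have hmem : Φ S ∈ Metric.ball (Φ T) ε := by
    rw [Metric.mem_ball]
    refine lt_of_eq_of_lt (dist_eq_norm (Φ S) (Φ T)) ?_
    show ‖Φ S - Φ T‖ < ε
    refine lt_of_le_of_lt (ContinuousLinearMap.opNorm_le_bound _ (norm_nonneg (S - T)) ?_) hS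
    rintro ⟨x, v⟩
    have hval : (Φ S - Φ T) (x, v) = ((S - T) x, 0) := by
      rw [ContinuousLinearMap.sub_apply, hΦ, hΦ]
      refine Prod.ext ?_ ?_
      · show (S x + ↑v) - (T x + ↑v) = S x - T x
        abel
      · show P x - P x = 0
        exact sub_self _
    calc ‖(Φ S - Φ T) (x, v)‖ = ‖(S - T) x‖ := by
          rw [hval, Prod.norm_def, norm_zero, max_eq_left (norm_nonneg _)]
      _ ≤ ‖S - T‖ * ‖x‖ := (S - T).le_opNorm x
      _ ≤ ‖S - T‖ * ‖(x, v)‖ :=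
          mul_le_mul_of_nonneg_left (norm_fst_le (x, v)) (norm_nonneg _)
  obtain ⟨eS, heS⟩ := hball hmem
  have heS' : ∀ p, eS p = Φ S p := fun p => by rw [← heS]; rfl
  have haS := aux_fredholm S (LinearMap.ker (T : H₁ →ₗ[ℝ] H₂)) Rᗮ P eS
    (fun x v => (heS' (x, v)).trans (hΦ S x v))
  have haT := aux_fredholm T (LinearMap.ker (T : H₁ →ₗ[ℝ] H₂)) Rᗮ P eT (fun x v => hΦ T x v)
  exact ⟨⟨haS.1, haS.2.1, haS.2.2.1⟩, by rw [haS.2.2.2, haT.2.2.2]⟩
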